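/- Let (D, m, k) be a Noetherian local domain with fraction field F and let ϑ : F^× → ℤ^d be an a-valuation that is OK relative to D. Let M be a D-submodule of F (for instance an ideal of D). Then for every g ∈ D∖{0} with v = ϑ(g) and every u ∈ ℤ^d, multiplication by g induces a k-linear injection (M ∩ F_{≥u})/(M ∩ F_{>u}) → (M ∩ F_{≥u+v})/(M ∩ F_{>u+v}). Consequently, for every 1 ≤ h ≤ [k_ϑ:k], the set ϑ^{(h)}(M) satisfies ϑ^{(h)}(M) + S ⊆ ϑ^{(h)}(M), i.e., it is a semigroup ideal of S = ϑ(D∖{0}). -/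

import Mathlib

/-!
Statement 18 (Remark 3.8): for a Noetherian local domain `(D,m,k)` with fraction field `F`,
an `a`-valuation `ϑ` OK relative to `D`, and a `D`-submodule `M` of `F`, multiplication by
any `g ∈ D∖{0}` (with `v = ϑ(g)`) induces a `k`-linear injection
`(M ∩ F_{≥u})/(M ∩ F_{>u}) → (M ∩ F_{≥u+v})/(M ∩ F_{>u+v})`; consequently each
`ϑ^{(h)}(M)` (for `1 ≤ h ≤ [k_ϑ:k]`) is a semigroup ideal of `S = ϑ(D∖{0})`.
(The `k`-vector space structure on these subquotients is induced by the `D`-action, so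
`k`-dimension is computed as `D`-module length.)
-/

open Filter MeasureTheory

noncomputable section

/-- The coercion of an integer vector to a real vector. -/
def zr {d : ℕ} (u : Fin d → ℤ) : Fin d → ℝ := fun i => (u i : ℝ)

/-- Inner product `⟨a,u⟩` of `a : ℝ^d` with an integer vector `u`. -/
def aip {d : ℕ} (a : Fin d → ℝ) (u : Fin d → ℤ) : ℝ := ∑ i, a i * (u i : ℝ)

/-- Inner product of two real vectors. -/
def rip {d : ℕ} (a u : Fin d → ℝ) : ℝ := ∑ i, a i * u i

/-- `Cone(S)`: the closure of the set of all `ℝ_{≥0}`-linear combinations of elements of `S`. -/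
def coneOf {d : ℕ} (S : Set (Fin d → ℤ)) : Set (Fin d → ℝ) :=
  closure {x | ∃ (n : ℕ) (c : Fin n → ℝ) (v : Fin n → Fin d → ℤ),
    (∀ i, 0 ≤ c i) ∧ (∀ i, v i ∈ S) ∧ x = ∑ i, c i • zr (v i)}

/-- The length `ℓ_R(M)` of an `R`-module `M`, defined as the Krull dimension of its lattice
of submodules, valued in `ℕ∞`. -/
def mlen (R M : Type*) [Semiring R] [AddCommGroup M] [Module R M] : ℕ∞ :=
  (Order.krullDim (Submodule R M)).unbotD 0

/-- The `q`-th Frobenius power `I^{[q]}` of an ideal `I`. -/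
def frobPow {R : Type*} [CommSemiring R] (I : Ideal R) (q : ℕ) : Ideal R :=
  Ideal.span ((fun x : R => x ^ q) '' (I : Set R))


lemma aux_aip_add {d : ℕ} (a : Fin d → ℝ) (u v : Fin d → ℤ) :
    aip a (u + v) = aip a u + aip a v := by
  simp only [aip, Pi.add_apply, Int.cast_add, mul_add]
  exact Finset.sum_add_distrib

lemma aux_mlen_le_of_injective {R M N : Type*} [Ring R] [AddCommGroup M] [AddCommGroup N]
    [Module R M] [Module R N] (f : M →ₗ[R] N) (hf : Function.Injective f) :
    mlen R M ≤ mlen R N := by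
  have h := Order.krullDim_le_of_strictMono (Submodule.map f)
    (Submodule.map_strictMono_of_injective hf)
  have h0 : (0 : WithBot ℕ∞) ≤ Order.krullDim (Submodule R M) :=
    Order.krullDim_nonneg
  unfold mlen
  cases hM : Order.krullDim (Submodule R M) with
  | bot => rw [hM] at h0; exact absurd h0 (by simp)
  | coe x =>
    cases hN : Order.krullDim (Submodule R N) with
    | bot => rw [hM, hN] at h; exact absurd h (by simp)
    | coe y => rw [hM, hN] at h; simpa using h

set_option maxHeartbeats 2000000 in
theorem stmt_18 {d : ℕ}
    (F : Type*) [Field F] (D : Subring F) [IsNoetherianRing D] [IsLocalRing D]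
    -- `F` is the fraction field of `D`
    (hfrac : ∀ x : F, ∃ r s : D, (s : F) ≠ 0 ∧ x * (s : F) = (r : F))
    -- `a ∈ ℝ^d` has coordinates linearly independent over `ℚ`
    (a : Fin d → ℝ) (ha : ∀ c : Fin d → ℚ, (∑ i, (c i : ℝ) * a i) = 0 → c = 0)
    -- `ϑ` is an `a`-valuation on `F` with value group `ℤ^d`
    (ϑ : F → Fin d → ℤ)
    (hmul : ∀ x y : F, x ≠ 0 → y ≠ 0 → ϑ (x * y) = ϑ x + ϑ y)
    (hsurj : ∀ u : Fin d → ℤ, ∃ x : F, x ≠ 0 ∧ ϑ x = u)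
    (hultra : ∀ x y : F, x ≠ 0 → y ≠ 0 → x + y ≠ 0 →
      min (aip a (ϑ x)) (aip a (ϑ y)) ≤ aip a (ϑ (x + y)))
    -- OK (i): `D` is strongly dominated by the valuation ring of `ϑ`
    (hdom : ∀ x : D, (x : F) ≠ 0 → 0 ≤ aip a (ϑ (x : F)))
    (hmax : ∀ x : D, x ∈ IsLocalRing.maximalIdeal D → (x : F) ≠ 0 → 0 < aip a (ϑ (x : F)))
    (hstrong : ∀ y ∈ coneOf (ϑ '' {x : F | x ∈ D ∧ x ≠ 0}), y ≠ 0 → 0 < rip a y)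
    -- OK (ii): the residue field extension `k ↪ k_ϑ` is finite, of degree `r = [k_ϑ:k]`
    (V : Subring F) (hV : (V : Set F) = {x : F | x = 0 ∨ 0 ≤ aip a (ϑ x)})
    [IsLocalRing V] (hDV : D ≤ V) [IsLocalHom (Subring.inclusion hDV)]
    (hfin : (IsLocalRing.ResidueField.map (Subring.inclusion hDV)).Finite)
    (r : ℕ)
    (hr : r =
      letI := (IsLocalRing.ResidueField.map (Subring.inclusion hDV)).toAlgebra
      Module.finrank (IsLocalRing.ResidueField D) (IsLocalRing.ResidueField V))
    -- OK (iii): there is `v₀` with `D ∩ F_{≥ n·v₀} ⊆ m^n` for all `n`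
    (v0 : Fin d → ℤ)
    (hv0 : ∀ n : ℕ, ∀ x : D, (x : F) ≠ 0 → aip a ((n : ℤ) • v0) ≤ aip a (ϑ (x : F)) →
      x ∈ IsLocalRing.maximalIdeal D ^ n)
    -- a `D`-submodule `M` of `F`, and its truncations `M ∩ F_{≥u}` and `M ∩ F_{>u}`
    (M : Submodule D F) (G G' : (Fin d → ℤ) → Submodule D F)
    (hG : ∀ u : Fin d → ℤ, (G u : Set F) =
      (M : Set F) ∩ {x : F | x = 0 ∨ (x ≠ 0 ∧ aip a u ≤ aip a (ϑ x))})
    (hG' : ∀ u : Fin d → ℤ, (G' u : Set F) =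
      (M : Set F) ∩ {x : F | x = 0 ∨ (x ≠ 0 ∧ aip a u < aip a (ϑ x))}) :
    -- multiplication by `g` induces a linear injection on the subquotients
    (∀ g : D, (g : F) ≠ 0 → ∀ u : Fin d → ℤ,
      ∃ φ : (↥(G u) ⧸ Submodule.comap (G u).subtype (G' u)) →ₗ[D]
          (↥(G (u + ϑ (g : F))) ⧸
            Submodule.comap (G (u + ϑ (g : F))).subtype (G' (u + ϑ (g : F)))),
        Function.Injective φ ∧
        ∀ x : ↥(G u), ∃ y : ↥(G (u + ϑ (g : F))), (y : F) = (g : F) * (x : F) ∧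
          φ (Submodule.Quotient.mk x) = Submodule.Quotient.mk y) ∧
    -- consequently `ϑ^{(h)}(M) + S ⊆ ϑ^{(h)}(M)` for `1 ≤ h ≤ r`
    (∀ h : ℕ, 1 ≤ h → h ≤ r → ∀ u : Fin d → ℤ,
      (h : ℕ∞) ≤ mlen D (↥(G u) ⧸ Submodule.comap (G u).subtype (G' u)) →
      ∀ s ∈ ϑ '' {x : F | x ∈ D ∧ x ≠ 0},
        (h : ℕ∞) ≤ mlen D (↥(G (u + s)) ⧸
          Submodule.comap (G (u + s)).subtype (G' (u + s))))  := by
  have memG : ∀ (u : Fin d → ℤ) (x : F),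
      x ∈ G u ↔ x ∈ M ∧ (x = 0 ∨ (x ≠ 0 ∧ aip a u ≤ aip a (ϑ x))) := by
    intro u x
    rw [← SetLike.mem_coe, hG u]
    exact Iff.rfl
  have memG' : ∀ (u : Fin d → ℤ) (x : F),
      x ∈ G' u ↔ x ∈ M ∧ (x = 0 ∨ (x ≠ 0 ∧ aip a u < aip a (ϑ x))) := by
    intro u x
    rw [← SetLike.mem_coe, hG' u]
    exact Iff.rfl
  have hsmul : ∀ (g : D) (x : F), g • x = (g : F) * x := fun _ _ => rfl
  have main : ∀ g : D, (g : F) ≠ 0 → ∀ u : Fin d → ℤ,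
      ∃ φ : (↥(G u) ⧸ Submodule.comap (G u).subtype (G' u)) →ₗ[D]
          (↥(G (u + ϑ (g : F))) ⧸
            Submodule.comap (G (u + ϑ (g : F))).subtype (G' (u + ϑ (g : F)))),
        Function.Injective φ ∧
        ∀ x : ↥(G u), ∃ y : ↥(G (u + ϑ (g : F))), (y : F) = (g : F) * (x : F) ∧
          φ (Submodule.Quotient.mk x) = Submodule.Quotient.mk y := by
    intro g hg u
    set v := ϑ (g : F) with hv
    have mapmem : ∀ x : F, x ∈ G u → (g : F) * x ∈ G (u + v) := by
      intro x hx
      rw [memG] at hx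
      obtain ⟨hxM, hcase⟩ := hx
      rw [memG]
      refine ⟨by rw [← hsmul]; exact M.smul_mem g hxM, ?_⟩
      rcases hcase with h0 | ⟨hx0, hle⟩
      · left; rw [h0, mul_zero]
      · right
        refine ⟨mul_ne_zero hg hx0, ?_⟩
        rw [hmul _ _ hg hx0, aux_aip_add, aux_aip_add]
        linarith
    have memiff : ∀ x : F, x ∈ G u → ((g : F) * x ∈ G' (u + v) ↔ x ∈ G' u) := by
      intro x hx
      have hxM : x ∈ M := ((memG u x).mp hx).1
      rw [memG', memG']
      by_cases h0 : x = 0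
      · subst h0; simp [hxM]
      have hgx : (g : F) * x ≠ 0 := mul_ne_zero hg h0
      constructor
      · rintro ⟨-, hcase⟩
        rcases hcase with h0' | ⟨-, hlt⟩
        · exact absurd h0' hgx
        · refine ⟨hxM, Or.inr ⟨h0, ?_⟩⟩
          rw [hmul _ _ hg h0, aux_aip_add, aux_aip_add] at hlt
          linarith
      · rintro ⟨-, hcase⟩
        rcases hcase with h0' | ⟨-, hlt⟩
        · exact absurd h0' h0
        · refine ⟨by rw [← hsmul]; exact M.smul_mem g hxM, Or.inr ⟨hgx, ?_⟩⟩
          rw [hmul _ _ hg h0, aux_aip_add, aux_aip_add]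
          linarith
    set f : ↥(G u) →ₗ[D] ↥(G (u + v)) :=
      ((LinearMap.lsmul D F g).comp (G u).subtype).codRestrict (G (u + v))
        (fun x => mapmem (x : F) x.2) with hf
    have hfval : ∀ x : ↥(G u), ((f x : F)) = (g : F) * (x : F) := fun x => rfl
    set N := Submodule.comap (G u).subtype (G' u) with hN
    set N' := Submodule.comap (G (u + v)).subtype (G' (u + v)) with hN'
    set ψ : ↥(G u) →ₗ[D] (↥(G (u + v)) ⧸ N') := N'.mkQ.comp f with hψ
    have hker : ∀ x : ↥(G u), ψ x = 0 ↔ (x : F) ∈ G' u := by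
      intro x
      have : ψ x = Submodule.Quotient.mk (f x) := rfl
      rw [this, Submodule.Quotient.mk_eq_zero]
      show (f x : F) ∈ G' (u + v) ↔ _
      rw [hfval]
      exact memiff (x : F) x.2
    have hle : N ≤ LinearMap.ker ψ := by
      intro x hx
      exact LinearMap.mem_ker.mpr ((hker x).mpr hx)
    refine ⟨N.liftQ ψ hle, ?_, ?_⟩
    · rw [← LinearMap.ker_eq_bot]
      exact Submodule.ker_liftQ_eq_bot N ψ hle
        (fun x hx => (hker x).mp (LinearMap.mem_ker.mp hx))
    · intro x
      exact ⟨f x, hfval x, rfl⟩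
  refine ⟨main, ?_⟩
  intro h h1 hr' u hlen s hs
  obtain ⟨g, ⟨hgD, hg0⟩, hgs⟩ := hs
  subst hgs
  obtain ⟨φ, hinj, -⟩ := main ⟨g, hgD⟩ hg0 u
  exact le_trans hlen (aux_mlen_le_of_injective φ hinj)


end
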